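/- Let μ be a Borel probability measure on a compact metric space X, and let Λ be a Borel set with μ(Λ) > 0. Suppose that for every x ∈ Λ there is a decreasing sequence of positive reals (ρ_n(x))_{n≥0} with ρ_n(x) → 0, log ρ_{n+1}(x)/log ρ_n(x) → 1, and a ≤ liminf_n [log μ(B(x, ρ_n(x))) / log ρ_n(x)]. Then the Hausdorff dimension of Λ is at least a. -/

import Mathlib

open MeasureTheory Filter Metric
open scoped ENNReal NNReal

private lemma aux_le {b d e : ℝ} (hb : 0 < b) (hd : 0 ≤ d) (hde : d < e) {c : ℝ≥0∞}
    (h : ∀ r : ℝ, d < r → r < e → c ≤ ENNReal.ofReal (r ^ b)) :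
    c ≤ ENNReal.ofReal (d ^ b) := by
  have hc : ContinuousAt (fun r : ℝ => ENNReal.ofReal (r ^ b)) d :=
    ENNReal.continuous_ofReal.continuousAt.comp
      (Real.continuousAt_rpow_const d b (Or.inr hb.le))
  have ht : Tendsto (fun r : ℝ => ENNReal.ofReal (r ^ b)) (nhdsWithin d (Set.Ioi d))
      (nhds (ENNReal.ofReal (d ^ b))) := hc.tendsto.mono_left nhdsWithin_le_nhds
  refine ge_of_tendsto ht ?_
  filter_upwards [Ioo_mem_nhdsGT_of_mem ⟨le_refl d, hde⟩] with r hr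
  exact h r hr.1 hr.2

/-- Lower-bound half of Young's criterion: pointwise lower estimates of local
measure exponents along a slowly varying sequence of radii bound the Hausdorff
dimension of `Λ` from below. -/
theorem stmt_6 {X : Type*} [MetricSpace X] [CompactSpace X] [MeasurableSpace X]
    [BorelSpace X] (μ : Measure X) [IsProbabilityMeasure μ]
    (Λ : Set X) (hΛ : MeasurableSet Λ) (hΛpos : 0 < μ Λ) (a : ℝ)
    (H : ∀ x ∈ Λ, ∃ ρ : ℕ → ℝ,
      (∀ n, 0 < ρ n) ∧ Antitone ρ ∧
      Tendsto ρ atTop (nhds 0) ∧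
      Tendsto (fun n => Real.log (ρ (n + 1)) / Real.log (ρ n)) atTop (nhds 1) ∧
      a ≤ atTop.liminf
        (fun n => Real.log (μ (ball x (ρ n))).toReal / Real.log (ρ n))) :
    ENNReal.ofReal a ≤ dimH Λ := by
  -- reduce to proving the bound for every positive `b < a`
  suffices key : ∀ b : ℝ, 0 < b → b < a → ENNReal.ofReal b ≤ dimH Λ by
    rcases le_or_gt a 0 with ha | ha
    · simpa [ENNReal.ofReal_of_nonpos ha] using (zero_le : 0 ≤ dimH Λ)
    · refine ENNReal.le_of_forall_nnreal_lt fun r hr => ?_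
      rcases eq_or_lt_of_le (zero_le : 0 ≤ r) with hr0 | hr0
      · simp [← hr0]
      · have hra : (r : ℝ) < a := by
          have h1 : r < a.toNNReal := by
            have : (r : ℝ≥0∞) < (a.toNNReal : ℝ≥0∞) := by
              simpa [ENNReal.ofReal] using hr
            exact_mod_cast this
          calc (r : ℝ) < (a.toNNReal : ℝ) := by exact_mod_cast h1
            _ = a := Real.coe_toNNReal a ha.le
        have := key r (by exact_mod_cast hr0) hra
        simpa [ENNReal.ofReal_coe_nnreal] using this
  intro b hb0 hba
  -- the good sets
  set C : ℕ → Set X := fun M =>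
    {x | ∀ r : ℝ, 0 < r → r < ((M : ℝ) + 1)⁻¹ →
      μ (ball x r) ≤ ENNReal.ofReal (r ^ b)} with hC
  -- pointwise claim : every point of Λ is in some C M
  have hpoint : ∀ x ∈ Λ, ∃ M : ℕ, x ∈ C M := by
    intro x hx
    obtain ⟨ρ, hpos, hanti, h0, hratio, hlim⟩ := H x hx
    set p := (2 * b + a) / 3 with hp
    set q := (b + 2 * a) / 3 with hq
    have hbp : b < p := by rw [hp]; linarith
    have hpq : p < q := by rw [hp, hq]; linarith
    have hqa : q < a := by rw [hq]; linarith
    have hp0 : 0 < p := lt_trans hb0 hbp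
    have hpne : p ≠ 0 := hp0.ne'
    have hq0 : 0 < q := lt_trans hp0 hpq
    -- E1 : eventually q ≤ log μ(B)/log ρ n
    have E1 : ∀ᶠ n in atTop,
        q ≤ Real.log (μ (ball x (ρ n))).toReal / Real.log (ρ n) := by
      set f := fun n => Real.log (μ (ball x (ρ n))).toReal / Real.log (ρ n) with hf
      set S := {c | ∀ᶠ n in atTop, c ≤ f n} with hS
      have hsup : q < sSup S := by
        rw [liminf_eq] at hlim
        exact lt_of_lt_of_le hqa hlim
      have hne : S.Nonempty := by
        by_contra hcon
        rw [Set.not_nonempty_iff_eq_empty] at hcon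
        rw [hcon, Real.sSup_empty] at hsup
        linarith
      obtain ⟨c, hcS, hqc⟩ := exists_lt_of_lt_csSup hne hsup
      filter_upwards [hcS] with n hn
      exact le_trans hqc.le hn
    -- E2 : eventually the log-ratio is < q / p
    have E2 : ∀ᶠ n in atTop,
        Real.log (ρ (n + 1)) / Real.log (ρ n) < q / p := by
      apply hratio.eventually_lt_const
      rw [lt_div_iff₀ hp0]; linarith
    -- E3 : eventually ρ n < 1
    have E3 : ∀ᶠ n in atTop, ρ n < 1 := h0.eventually_lt_const one_pos
    obtain ⟨N, hN⟩ := (E1.and (E2.and E3)).exists_forall_of_atTop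
    -- the scale bound
    have hmain : ∀ r : ℝ, 0 < r → r < ρ N → μ (ball x r) ≤ ENNReal.ofReal (r ^ b) := by
      intro r hr0 hrN
      have hex : ∃ m, ρ m < r := (h0.eventually_lt_const hr0).exists
      set k := Nat.find hex with hk
      have hk1 : ρ k < r := Nat.find_spec hex
      have hklt : ∀ m, m < k → r ≤ ρ m := fun m hm => le_of_not_gt (Nat.find_min hex hm)
      have hNk : N < k := by
        by_contra hcon
        push_neg at hcon
        exact absurd hk1 (not_lt.mpr (le_trans hrN.le (hanti hcon)))
      set n := k - 1 with hn
      have hnk : n + 1 = k := by omega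
      have hnN : N ≤ n := by omega
      have hrn : r ≤ ρ n := hklt n (by omega)
      have hrn1 : ρ (n + 1) < r := by rw [hnk]; exact hk1
      obtain ⟨h1, h2, h3⟩ := hN n hnN
      have hρn0 : 0 < ρ n := hpos n
      have hlogρ : Real.log (ρ n) < 0 := Real.log_neg hρn0 h3
      have hLne : Real.log (ρ n) ≠ 0 := ne_of_lt hlogρ
      have hr1 : r < 1 := lt_of_le_of_lt hrn h3
      have hlogr : Real.log r < 0 := Real.log_neg hr0 hr1
      -- log ρ(n+1) > (q/p) log ρ n   from E2
      have h2' : q / p * Real.log (ρ n) < Real.log (ρ (n + 1)) := by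
        have h := mul_lt_mul_of_neg_right h2 hlogρ
        rwa [div_mul_cancel₀ _ hLne] at h
      have hlr1 : Real.log (ρ (n + 1)) < Real.log r := Real.log_lt_log (hpos _) hrn1
      have hplogr : q * Real.log (ρ n) < p * Real.log r := by
        have h := mul_lt_mul_of_pos_left (lt_trans h2' hlr1) hp0
        have heq : p * (q / p * Real.log (ρ n)) = q * Real.log (ρ n) := by
          field_simp
        rwa [heq] at h
      have hpb : p * Real.log r ≤ b * Real.log r :=
        mul_le_mul_of_nonpos_right hbp.le hlogr.le
      have hmfin : μ (ball x (ρ n)) ≠ ⊤ := measure_ne_top μ _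
      have hmono : μ (ball x r) ≤ μ (ball x (ρ n)) :=
        measure_mono (ball_subset_ball hrn)
      rcases eq_or_lt_of_le
          (ENNReal.toReal_nonneg : (0:ℝ) ≤ (μ (ball x (ρ n))).toReal) with hm0 | hm0
      · have hz : μ (ball x (ρ n)) = 0 := by
          rcases (ENNReal.toReal_eq_zero_iff _).mp hm0.symm with h | h
          · exact h
          · exact absurd h hmfin
        rw [hz] at hmono
        exact le_trans hmono zero_le
      · have hlogm : Real.log (μ (ball x (ρ n))).toReal ≤ q * Real.log (ρ n) := by
          have h := mul_le_mul_of_nonpos_right h1 hlogρ.le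
          rwa [div_mul_cancel₀ _ hLne] at h
        have hfinal : Real.log (μ (ball x (ρ n))).toReal ≤ Real.log (r ^ b) := by
          rw [Real.log_rpow hr0]
          exact le_of_lt (lt_of_le_of_lt hlogm (lt_of_lt_of_le hplogr hpb))
        have hmr : (μ (ball x (ρ n))).toReal ≤ r ^ b := by
          have h := Real.exp_le_exp.mpr hfinal
          rwa [Real.exp_log hm0, Real.exp_log (Real.rpow_pos_of_pos hr0 b)] at h
        calc μ (ball x r) ≤ μ (ball x (ρ n)) := hmono
          _ = ENNReal.ofReal (μ (ball x (ρ n))).toReal := (ENNReal.ofReal_toReal hmfin).symm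
          _ ≤ ENNReal.ofReal (r ^ b) := ENNReal.ofReal_le_ofReal hmr
    -- choose M
    have hρN : 0 < ρ N := hpos N
    obtain ⟨M, hM⟩ := exists_nat_gt (ρ N)⁻¹
    refine ⟨M, fun r hr0 hrM => hmain r hr0 (lt_of_lt_of_le hrM ?_)⟩
    have h1 : (ρ N)⁻¹ ≤ (M : ℝ) + 1 := by linarith
    calc ((M : ℝ) + 1)⁻¹ ≤ ((ρ N)⁻¹)⁻¹ := by
          apply inv_anti₀ (by positivity) h1
      _ = ρ N := inv_inv _
  -- each C M is closed
  have hclosed : ∀ M : ℕ, IsClosed (C M) := by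
    intro M
    refine isClosed_of_closure_subset fun x hx => ?_
    intro r hr0 hrM
    refine aux_le hb0 hr0.le hrM fun r' hrr' hr'M => ?_
    obtain ⟨y, hyC, hxy⟩ := Metric.mem_closure_iff.mp hx (r' - r) (by linarith)
    have hsub : ball x r ⊆ ball y r' := by
      intro z hz
      rw [mem_ball] at hz ⊢
      have h := dist_triangle z x y
      have hxy' : dist x y < r' - r := hxy
      linarith
    exact le_trans (measure_mono hsub) (hyC r' (by linarith) hr'M)
  -- choose M with positive measure
  have hcover : Λ ⊆ ⋃ M, Λ ∩ C M := by
    intro x hx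
    obtain ⟨M, hM⟩ := hpoint x hx
    exact Set.mem_iUnion.2 ⟨M, hx, hM⟩
  obtain ⟨M, hMpos⟩ : ∃ M, 0 < μ (Λ ∩ C M) := by
    by_contra hcon
    push_neg at hcon
    have hz : ∀ M, μ (Λ ∩ C M) = 0 := fun M => le_antisymm (hcon M) zero_le
    have hle : μ Λ ≤ ∑' M, μ (Λ ∩ C M) :=
      le_trans (measure_mono hcover) (measure_iUnion_le _)
    simp only [hz, tsum_zero, nonpos_iff_eq_zero] at hle
    exact hΛpos.ne' hle
  set A := Λ ∩ C M with hA
  have hAmeas : MeasurableSet A := hΛ.inter (hclosed M).measurableSet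
  set εM := ((M : ℝ) + 1)⁻¹ with hεMdef
  have hεM : 0 < εM := by positivity
  -- mass distribution principle
  have hfrost : μ.restrict A ≤ μH[b] := by
    apply MeasureTheory.Measure.le_hausdorffMeasure b _ (ENNReal.ofReal (εM / 2))
      (ENNReal.ofReal_pos.mpr (by linarith))
    intro s hs
    rw [Measure.restrict_apply' hAmeas]
    rcases (s ∩ A).eq_empty_or_nonempty with hse | ⟨x, hxs, hxA⟩
    · simp [hse]
    · have hdfin : EMetric.diam s ≠ ⊤ := (lt_of_le_of_lt hs ENNReal.ofReal_lt_top).ne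
      set d := (EMetric.diam s).toReal with hd
      have hd0 : (0:ℝ) ≤ d := ENNReal.toReal_nonneg
      have hdle : d ≤ εM / 2 := ENNReal.toReal_le_of_le_ofReal (by positivity) hs
      have hdε : d < εM := lt_of_le_of_lt hdle (by linarith)
      have hkey : μ (s ∩ A) ≤ ENNReal.ofReal (d ^ b) := by
        refine aux_le hb0 hd0 hdε fun r hdr hrε => ?_
        have hsub : s ⊆ ball x r := by
          intro y hy
          rw [mem_ball]
          have h1 : edist y x ≤ EMetric.diam s := EMetric.edist_le_diam_of_mem hy hxs
          have h2 : dist y x ≤ d := by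
            rw [dist_edist]
            exact ENNReal.toReal_mono hdfin h1
          linarith
        exact le_trans (measure_mono (Set.inter_subset_left.trans hsub))
          (hxA.2 r (lt_of_le_of_lt hd0 hdr) hrε)
      calc μ (s ∩ A) ≤ ENNReal.ofReal (d ^ b) := hkey
        _ = ENNReal.ofReal d ^ b := (ENNReal.ofReal_rpow_of_nonneg hd0 hb0.le).symm
        _ = EMetric.diam s ^ b := by rw [ENNReal.ofReal_toReal hdfin]
  have hμH : μH[b] A ≠ 0 := by
    have h1 : μ A ≤ μH[b] A := by
      have h := Measure.le_iff'.mp hfrost A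
      rwa [Measure.restrict_apply' hAmeas, Set.inter_self] at h
    intro h
    rw [h] at h1
    exact hMpos.ne' (le_antisymm h1 zero_le)
  have hbNN : ((b.toNNReal : ℝ≥0) : ℝ) = b := Real.coe_toNNReal b hb0.le
  have hdim : ((b.toNNReal : ℝ≥0) : ℝ≥0∞) ≤ dimH A := by
    apply le_dimH_of_hausdorffMeasure_ne_zero
    show μH[((b.toNNReal : ℝ≥0) : ℝ)] A ≠ 0
    rwa [hbNN]
  calc ENNReal.ofReal b = ((b.toNNReal : ℝ≥0) : ℝ≥0∞) := rfl
    _ ≤ dimH A := hdim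
    _ ≤ dimH Λ := dimH_mono Set.inter_subset_left
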